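/- Let Q = Q_1 × ⋯ × Q_1 × Q_{n+1} be a product measure on 𝒵^{n+1} (first n factors equal to Q_1), with Q_{n+1} and Q_1 mutually absolutely continuous. Let Q̄ = (1/(n+1)) ∑_{i=1}^{n+1} Q^{(i)}, where Q^{(i)} places Q_{n+1} in the i-th coordinate and Q_1 elsewhere. Then dQ/dQ̄ (z^{n+1}) = r(z_{n+1}) / ((1/(n+1)) ∑_{i=1}^{n+1} r(z_i)), where r = dQ_{n+1}/dQ_1. -/

import Mathlib

open MeasureTheory
open scoped ENNReal

section Aux

variable {Z : Type*} [MeasurableSpace Z]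

/-- Tonelli for a product of functions of separate variables, `lintegral` version. -/
theorem lintegral_pi_prod_aux : ∀ (m : ℕ) (μ : Fin m → Measure Z),
    (∀ i, SigmaFinite (μ i)) → ∀ (f : Fin m → Z → ℝ≥0∞), (∀ i, Measurable (f i)) →
    ∫⁻ z, ∏ i, f i (z i) ∂Measure.pi μ = ∏ i, ∫⁻ x, f i x ∂(μ i) := by
  intro m
  induction m with
  | zero =>
    intro μ _ f _
    simp [Measure.pi_of_empty]
  | succ n ih =>
    intro μ hμ f hf
    have : ∀ i, SigmaFinite (μ i) := hμ
    have hF : Measurable fun z : Fin (n + 1) → Z => ∏ i, f i (z i) :=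
      Finset.measurable_prod _ fun i _ => (hf i).comp (measurable_pi_apply i)
    have hmp := (measurePreserving_piFinSuccAbove μ 0).symm
    rw [← hmp.lintegral_comp hF]
    have hcomp : ∀ p : Z × (Fin n → Z),
        (∏ i, f i ((MeasurableEquiv.piFinSuccAbove (fun _ : Fin (n + 1) => Z) 0).symm p i))
          = f 0 p.1 * ∏ j : Fin n, f j.succ (p.2 j) := by
      intro p
      have hsymm : ((MeasurableEquiv.piFinSuccAbove (fun _ : Fin (n + 1) => Z) 0).symm p)
          = Fin.insertNth 0 p.1 p.2 := rfl
      rw [hsymm, Fin.insertNth_zero, Fin.prod_univ_succ]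
      simp
    simp only [hcomp]
    have heq : (Measure.pi fun j : Fin n => μ ((0 : Fin (n + 1)).succAbove j))
        = Measure.pi fun j : Fin n => μ j.succ := by
      congr 1
    rw [heq]
    have hstep : ∫⁻ a : Z × (Fin n → Z), f 0 a.1 * ∏ j : Fin n, f j.succ (a.2 j)
          ∂((μ 0).prod (Measure.pi fun j : Fin n => μ j.succ))
        = (∫⁻ x, f 0 x ∂μ 0) * ∫⁻ y, ∏ j : Fin n, f j.succ (y j)
            ∂(Measure.pi fun j : Fin n => μ j.succ) :=
      lintegral_prod_mul ((hf 0).aemeasurable)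
        ((Finset.measurable_prod _ fun (j : Fin n) _ =>
          (hf j.succ).comp (measurable_pi_apply j)).aemeasurable)
    rw [hstep, ih (fun j => μ j.succ) (fun j => hμ j.succ) (fun j => f j.succ)
      (fun j => hf j.succ), Fin.prod_univ_succ]

/-- The product measure with `Qb` in coordinate `i` and `Qa` elsewhere has density
`z ↦ r (z i)` with respect to `Qa^{n+1}`, where `r = dQb/dQa`. -/
theorem pi_eq_withDensity_aux (n : ℕ) (Qa Qb : Measure Z) [IsProbabilityMeasure Qa]
    [IsProbabilityMeasure Qb] (hab : Qb ≪ Qa) (i : Fin (n + 1)) :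
    (Measure.pi fun j : Fin (n + 1) => if j = i then Qb else Qa)
      = (Measure.pi fun _ : Fin (n + 1) => Qa).withDensity
          (fun z => Qb.rnDeriv Qa (z i)) := by
  have hr : Measurable (Qb.rnDeriv Qa) := Measure.measurable_rnDeriv _ _
  haveI : ∀ j : Fin (n + 1), SigmaFinite (if j = i then Qb else Qa) := fun j => by
    split <;> infer_instance
  refine Measure.pi_eq fun s hs => ?_
  rw [withDensity_apply _ (MeasurableSet.univ_pi hs),
    ← lintegral_indicator (MeasurableSet.univ_pi hs)]
  have key : ∀ z : Fin (n + 1) → Z,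
      (Set.univ.pi s).indicator (fun z => Qb.rnDeriv Qa (z i)) z
        = ∏ j, (s j).indicator (fun x => if j = i then Qb.rnDeriv Qa x else 1) (z j) := by
    intro z
    by_cases hz : z ∈ Set.univ.pi s
    · rw [Set.indicator_of_mem hz]
      have hmem : ∀ j, z j ∈ s j := fun j => hz j (Set.mem_univ j)
      rw [Finset.prod_congr rfl (fun j _ => Set.indicator_of_mem (hmem j) _)]
      rw [Finset.prod_ite_eq' Finset.univ i (fun j => Qb.rnDeriv Qa (z j))]
      simp
    · rw [Set.indicator_of_notMem hz]
      obtain ⟨j, hj⟩ : ∃ j, z j ∉ s j := by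
        by_contra h
        push_neg at h
        exact hz fun j _ => h j
      exact (Finset.prod_eq_zero (Finset.mem_univ j)
        (by rw [Set.indicator_of_notMem hj])).symm
  calc ∫⁻ z, (Set.univ.pi s).indicator (fun z => Qb.rnDeriv Qa (z i)) z
        ∂(Measure.pi fun _ : Fin (n + 1) => Qa)
      = ∫⁻ z, ∏ j, (s j).indicator (fun x => if j = i then Qb.rnDeriv Qa x else 1) (z j)
          ∂(Measure.pi fun _ : Fin (n + 1) => Qa) := by
        exact lintegral_congr key
    _ = ∏ j, ∫⁻ x, (s j).indicator (fun x => if j = i then Qb.rnDeriv Qa x else 1) x ∂Qa := by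
        refine lintegral_pi_prod_aux (n + 1) _ (fun _ => inferInstance) _ fun j => ?_
        refine Measurable.indicator ?_ (hs j)
        by_cases hji : j = i <;> simp [hji, hr, measurable_const]
    _ = ∏ j, (if j = i then Qb else Qa) (s j) := by
        refine Finset.prod_congr rfl fun j _ => ?_
        rw [lintegral_indicator (hs j)]
        by_cases hji : j = i
        · simp only [hji, if_pos]
          conv_rhs => rw [← Measure.withDensity_rnDeriv_eq Qb Qa hab]
          rw [withDensity_apply _ (hs i)]
        · simp [hji]

theorem withDensity_finsetSum_aux {α ι : Type*} [MeasurableSpace α] (s : Finset ι)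
    (μ : Measure α) (f : ι → α → ℝ≥0∞) (hf : ∀ i, Measurable (f i)) :
    μ.withDensity (fun x => ∑ i ∈ s, f i x) = ∑ i ∈ s, μ.withDensity (f i) := by
  classical
  induction s using Finset.induction with
  | empty => simp
  | insert a t hnot ih =>
    simp only [Finset.sum_insert hnot]
    rw [← ih]
    exact withDensity_add_left (hf a) _

end Aux

/-- Let `Q^{(i)}` be the product measure on `Z^{n+1}` with `Q_{n+1}` (here `Qb`)
in coordinate `i` and `Q_1` (here `Qa`) elsewhere, `Q = Q^{(n+1)}`, and
`Q̄ = (1/(n+1)) ∑ᵢ Q^{(i)}`. If `Qa` and `Qb` are mutually absolutely continuous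
with `r = dQb/dQa`, then `dQ/dQ̄(z) = r(z_{n+1}) / ((1/(n+1)) ∑ᵢ r(zᵢ))`,
`Q̄`-almost everywhere. -/
theorem stmt_11 {Z : Type*} [MeasurableSpace Z] (n : ℕ)
    (Qa Qb : Measure Z) [IsProbabilityMeasure Qa] [IsProbabilityMeasure Qb]
    (hab : Qb ≪ Qa) (hba : Qa ≪ Qb) :
    (Measure.pi fun j : Fin (n + 1) => if j = Fin.last n then Qb else Qa).rnDeriv
        ((↑(n + 1) : ℝ≥0∞)⁻¹ •
          ∑ i : Fin (n + 1),
            Measure.pi fun j : Fin (n + 1) => if j = i then Qb else Qa)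
      =ᵐ[(↑(n + 1) : ℝ≥0∞)⁻¹ •
          ∑ i : Fin (n + 1),
            Measure.pi fun j : Fin (n + 1) => if j = i then Qb else Qa]
        fun z : Fin (n + 1) → Z =>
          Qb.rnDeriv Qa (z (Fin.last n)) /
            ((↑(n + 1) : ℝ≥0∞)⁻¹ * ∑ i : Fin (n + 1), Qb.rnDeriv Qa (z i)) := by
  set r : Z → ℝ≥0∞ := Qb.rnDeriv Qa with hr_def
  have hr : Measurable r := Measure.measurable_rnDeriv _ _
  set P : Measure (Fin (n + 1) → Z) := Measure.pi (fun _ => Qa) with hP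
  set g : (Fin (n + 1) → Z) → ℝ≥0∞ :=
    fun z => (↑(n + 1) : ℝ≥0∞)⁻¹ * ∑ i : Fin (n + 1), r (z i) with hg_def
  have hg : Measurable g :=
    (Finset.measurable_sum _ fun i _ => hr.comp (measurable_pi_apply i)).const_mul _
  have hc_ne_top : ((↑(n + 1) : ℝ≥0∞)⁻¹ : ℝ≥0∞) ≠ ∞ := by
    simp [ENNReal.inv_ne_top]
  -- the mixture is `P.withDensity g`
  have hmix : ((↑(n + 1) : ℝ≥0∞)⁻¹ •
        ∑ i : Fin (n + 1), Measure.pi fun j : Fin (n + 1) => if j = i then Qb else Qa)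
      = P.withDensity g := by
    have h1 : ∀ i : Fin (n + 1),
        (Measure.pi fun j : Fin (n + 1) => if j = i then Qb else Qa)
          = P.withDensity (fun z => r (z i)) := fun i => pi_eq_withDensity_aux n Qa Qb hab i
    calc ((↑(n + 1) : ℝ≥0∞)⁻¹ •
          ∑ i : Fin (n + 1), Measure.pi fun j : Fin (n + 1) => if j = i then Qb else Qa)
        = (↑(n + 1) : ℝ≥0∞)⁻¹ • ∑ i : Fin (n + 1), P.withDensity (fun z => r (z i)) := by
          rw [Finset.sum_congr rfl fun i _ => h1 i]
      _ = (↑(n + 1) : ℝ≥0∞)⁻¹ • P.withDensity (fun z => ∑ i : Fin (n + 1), r (z i)) := by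
          rw [← withDensity_finsetSum_aux (f := fun (i : Fin (n + 1)) (z : Fin (n + 1) → Z) => r (z i))
            Finset.univ P (fun i => hr.comp (measurable_pi_apply i))]
      _ = P.withDensity g := by
          rw [← withDensity_smul' _ _ hc_ne_top]
          congr 1
  -- `Q = P.withDensity f`
  have hQ : (Measure.pi fun j : Fin (n + 1) => if j = Fin.last n then Qb else Qa)
      = P.withDensity (fun z => r (z (Fin.last n))) :=
    pi_eq_withDensity_aux n Qa Qb hab (Fin.last n)
  rw [hmix, hQ]
  -- a.e. positivity and finiteness of `g`
  have hpos : ∀ᵐ x ∂Qa, 0 < r x := Measure.rnDeriv_pos' hba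
  have hfin : ∀ᵐ x ∂Qa, r x < ∞ := Measure.rnDeriv_lt_top _ _
  have hg_pos : ∀ᵐ z ∂P, g z ≠ 0 := by
    have h := (Measure.tendsto_eval_ae_ae (μ := fun _ : Fin (n + 1) => Qa)
      (i := Fin.last n)).eventually hpos
    filter_upwards [h] with z hz
    have hsum : 0 < ∑ i : Fin (n + 1), r (z i) :=
      lt_of_lt_of_le hz (Finset.single_le_sum (f := fun i => r (z i))
        (fun _ _ => zero_le) (Finset.mem_univ _))
    simp only [hg_def]
    exact mul_ne_zero (by simp) hsum.ne'
  have hg_fin : ∀ᵐ z ∂P, g z ≠ ∞ := by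
    have h : ∀ᵐ z ∂P, ∀ i : Fin (n + 1), r (z i) < ∞ := by
      rw [MeasureTheory.ae_all_iff]
      exact fun i => (Measure.tendsto_eval_ae_ae
        (μ := fun _ : Fin (n + 1) => Qa) (i := i)).eventually hfin
    filter_upwards [h] with z hz
    simp only [hg_def]
    exact ENNReal.mul_ne_top hc_ne_top
      (ENNReal.sum_lt_top.mpr fun i _ => hz i).ne
  -- compute the Radon-Nikodym derivative
  have hf_meas : Measurable (fun z : Fin (n + 1) → Z => r (z (Fin.last n))) :=
    hr.comp (measurable_pi_apply _)
  have key := Measure.rnDeriv_withDensity_right_of_absolutelyContinuous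
    (μ := P.withDensity (fun z => r (z (Fin.last n)))) (ν := P)
    (withDensity_absolutelyContinuous P _) hg.aemeasurable hg_pos hg_fin
  have hf := Measure.rnDeriv_withDensity P hf_meas
  have hac : P.withDensity g ≪ P := withDensity_absolutelyContinuous P g
  filter_upwards [hac.ae_le key, hac.ae_le hf] with z h1 h2
  rw [h1, h2, ENNReal.div_eq_inv_mul]
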